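/- Let G be a finite multigraph and T a subset of its vertices. Then G contains a T-join (a subgraph J with OddV(J) = T, where OddV(J) is the set of vertices of odd degree in J) if and only if every connected component of G contains an even number of vertices of T. -/

import Mathlib

open Finset
open scoped Classical

/-- A multigraph on vertex type `V` with edge index type `E`: each edge `e` has two
distinct endpoints given as an unordered pair `ends e` (no loops, multiple edges allowed). -/
structure Multigraph (V : Type) (E : Type) where
  ends : E → Sym2 V
  no_loops : ∀ e, ¬ (ends e).IsDiag

namespace Multigraph

variable {V E : Type} [Fintype V] [Fintype E]

/-- The number of edges from the edge set `F` incident with `v`. -/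
noncomputable def degIn (G : Multigraph V E) (F : Finset E) (v : V) : ℕ :=
  (F.filter (fun e => v ∈ G.ends e)).card

/-- The degree of `v` in `G`. -/
noncomputable def deg (G : Multigraph V E) (v : V) : ℕ := G.degIn Finset.univ v

/-- The underlying simple graph of `G`. -/
def simple (G : Multigraph V E) : SimpleGraph V where
  Adj x y := x ≠ y ∧ ∃ e : E, G.ends e = s(x, y)
  symm := by
    refine ⟨?_⟩
    rintro x y ⟨hxy, e, he⟩
    exact ⟨hxy.symm, e, by rw [he, Sym2.eq_swap]⟩
  loopless := ⟨fun x h => h.1 rfl⟩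

/-- `C` is the vertex set of a connected component of the subgraph of `G` induced by `S`. -/
def IsComponentOf (G : Multigraph V E) (S : Set V) (C : Finset V) : Prop :=
  ∃ v ∈ S, ∀ x : V, x ∈ C ↔
    Relation.ReflTransGen (fun a b => a ∈ S ∧ b ∈ S ∧ (G.simple).Adj a b) v x

/-- The number of edges of `G` with one endpoint in `U₁` and the other in `U₂`. -/
noncomputable def eBetween (G : Multigraph V E) (U₁ U₂ : Finset V) : ℕ :=
  (Finset.univ.filter (fun e : E => ∃ x ∈ U₁, ∃ y ∈ U₂, G.ends e = s(x, y))).card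

/-- The set of vertices of `G` of odd degree. -/
noncomputable def oddVerts (G : Multigraph V E) : Finset V :=
  Finset.univ.filter (fun v => Odd (G.deg v))

/-- The set of vertices of `G` of even degree. -/
noncomputable def evenVerts (G : Multigraph V E) : Finset V :=
  Finset.univ.filter (fun v => Even (G.deg v))

/-- `F` forms an odd subgraph: every vertex incident with an edge of `F` has odd `F`-degree. -/
def IsOddSet (G : Multigraph V E) (F : Finset E) : Prop :=
  ∀ v : V, (∃ e ∈ F, v ∈ G.ends e) → Odd (G.degIn F v)

/-- `F` forms an even subgraph: every vertex has even `F`-degree. -/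
def IsEvenSet (G : Multigraph V E) (F : Finset E) : Prop :=
  ∀ v : V, Even (G.degIn F v)

end Multigraph

open Multigraph

section Aux

lemma card_symmDiff_parity {α : Type*} [DecidableEq α] (s t : Finset α) :
    Odd ((symmDiff s t).card) ↔ Xor' (Odd s.card) (Odd t.card) := by
  have h1 : (symmDiff s t).card + 2 * (s ∩ t).card = s.card + t.card := by
    have hd : Disjoint (s \ t) (t \ s) := disjoint_sdiff_sdiff
    have hst : symmDiff s t = (s \ t) ∪ (t \ s) := by
      ext a; simp [Finset.mem_symmDiff]
    rw [hst, Finset.card_union_of_disjoint hd]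
    have h2 := Finset.card_sdiff_add_card_inter s t
    have h3 := Finset.card_sdiff_add_card_inter t s
    rw [Finset.inter_comm] at h3
    omega
  rw [Nat.odd_iff, Nat.odd_iff, Nat.odd_iff]
  unfold Xor' Xor
  omega

variable {V E : Type} [Fintype V] [Fintype E]

lemma degIn_symmDiff_parity (G : Multigraph V E) (F F' : Finset E) (v : V) :
    Odd (G.degIn (symmDiff F F') v) ↔ Xor' (Odd (G.degIn F v)) (Odd (G.degIn F' v)) := by
  have hfilter : (symmDiff F F').filter (fun e => v ∈ G.ends e)
      = symmDiff (F.filter (fun e => v ∈ G.ends e)) (F'.filter (fun e => v ∈ G.ends e)) := by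
    ext e; simp [Finset.mem_symmDiff]; tauto
  unfold Multigraph.degIn
  rw [hfilter]
  exact card_symmDiff_parity _ _

lemma exists_path_set (G : Multigraph V E) {u v : V}
    (h : G.simple.Reachable u v) :
    ∃ F : Finset E, ∀ x : V, Odd (G.degIn F x) ↔ Xor' (x = u) (x = v) := by
  obtain ⟨w⟩ := h
  induction w with
  | nil => exact ⟨∅, by intro x; simp [Multigraph.degIn, Xor']⟩
  | @cons a b c hadj p ih =>
    obtain ⟨F, hF⟩ := ih
    obtain ⟨hne, e, he⟩ : a ≠ b ∧ ∃ e, G.ends e = s(a, b) := hadj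
    refine ⟨symmDiff {e} F, fun x => ?_⟩
    rw [degIn_symmDiff_parity, hF]
    have hsingle : Odd (G.degIn {e} x) ↔ (x = a ∨ x = b) := by
      unfold Multigraph.degIn
      rw [Finset.filter_singleton]
      split_ifs with hx
      · rw [he] at hx; simp only [Sym2.mem_iff] at hx; simpa using hx
      · rw [he] at hx; simp only [Sym2.mem_iff] at hx; simpa using hx
    rw [hsingle]
    unfold Xor'
    by_cases h1 : x = a <;> by_cases h2 : x = b <;> by_cases h3 : x = c <;> simp_all

lemma forward_lemma (G : Multigraph V E) (T : Finset V) (J : Finset E)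
    (hJ : ∀ v : V, Odd (G.degIn J v) ↔ v ∈ T) (c : G.simple.ConnectedComponent) :
    Even ((Finset.univ.filter
      (fun v => v ∈ T ∧ G.simple.connectedComponentMk v = c)).card) := by
  set C := Finset.univ.filter (fun v => G.simple.connectedComponentMk v = c) with hC
  have hsum : Even (∑ v ∈ C, G.degIn J v) := by
    have hswap : ∑ v ∈ C, G.degIn J v
        = ∑ e ∈ J, (C.filter (fun v => v ∈ G.ends e)).card := by
      simp only [Multigraph.degIn, Finset.card_filter]
      rw [Finset.sum_comm]
    rw [hswap]
    apply Finset.even_sum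
    intro e _
    obtain ⟨a, b, hab⟩ : ∃ a b, G.ends e = s(a, b) :=
      ⟨(G.ends e).out.1, (G.ends e).out.2, by
        conv_lhs => rw [← (G.ends e).out_eq]⟩
    have hne : a ≠ b := fun h => G.no_loops e (by rw [hab, h]; simp)
    have hadj : G.simple.Adj a b := show a ≠ b ∧ _ from ⟨hne, e, hab⟩
    have hmk : G.simple.connectedComponentMk a = G.simple.connectedComponentMk b :=
      SimpleGraph.ConnectedComponent.sound hadj.reachable
    have hfe : C.filter (fun v => v ∈ G.ends e) = C ∩ {a, b} := by
      ext x
      simp [hab, Sym2.mem_iff]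
    by_cases ha : a ∈ C
    · have hb : b ∈ C := by
        simp only [hC, Finset.mem_filter, Finset.mem_univ, true_and] at ha ⊢
        rw [← hmk]; exact ha
      have hCab : C ∩ {a, b} = {a, b} := by
        ext x
        simp only [Finset.mem_inter, Finset.mem_insert, Finset.mem_singleton]
        constructor
        · tauto
        · rintro (rfl | rfl) <;> simp_all
      rw [hfe, hCab, Finset.card_insert_of_notMem (by simp [hne]), Finset.card_singleton]
      exact ⟨1, rfl⟩
    · have hb : b ∉ C := by
        simp only [hC, Finset.mem_filter, Finset.mem_univ, true_and] at ha ⊢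
        rw [← hmk]; exact ha
      have hCab : C ∩ {a, b} = ∅ := by
        ext x
        simp only [Finset.mem_inter, Finset.mem_insert, Finset.mem_singleton,
          Finset.notMem_empty, iff_false, not_and]
        rintro hx (rfl | rfl) <;> tauto
      rw [hfe, hCab, Finset.card_empty]
      exact Even.zero
  rw [Finset.even_sum_iff_even_card_odd] at hsum
  have heq : C.filter (fun v => Odd (G.degIn J v))
      = Finset.univ.filter (fun v => v ∈ T ∧ G.simple.connectedComponentMk v = c) := by
    ext x
    simp only [hC, Finset.mem_filter, Finset.mem_univ, true_and, hJ x]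
    tauto
  rwa [heq] at hsum

lemma build_lemma (G : Multigraph V E) :
    ∀ n (T : Finset V), T.card = n →
    (∀ c : G.simple.ConnectedComponent,
        Even ((Finset.univ.filter
          (fun v => v ∈ T ∧ G.simple.connectedComponentMk v = c)).card)) →
    ∃ J : Finset E, ∀ v : V, Odd (G.degIn J v) ↔ v ∈ T := by
  intro n
  induction n using Nat.strong_induction_on with
  | _ n ih =>
  intro T hcard hT
  rcases Finset.eq_empty_or_nonempty T with rfl | ⟨u, hu⟩
  · exact ⟨∅, by intro v; simp [Multigraph.degIn]⟩
  · set c := G.simple.connectedComponentMk u with hc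
    set s := Finset.univ.filter
      (fun w => w ∈ T ∧ G.simple.connectedComponentMk w = c) with hs
    have hmem : u ∈ s := by simp [hs, hu, hc]
    have h1 : 1 < s.card := by
      rcases hT c with ⟨k, hk⟩
      have := Finset.card_pos.mpr ⟨u, hmem⟩
      rw [← hs] at hk
      omega
    obtain ⟨v, hvmem, hvne⟩ := Finset.exists_mem_ne h1 u
    rw [hs] at hvmem
    simp only [Finset.mem_filter, Finset.mem_univ, true_and] at hvmem
    obtain ⟨hvT, hvc⟩ := hvmem
    have hreach : G.simple.Reachable u v :=
      SimpleGraph.ConnectedComponent.exact (hc ▸ hvc.symm)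
    obtain ⟨F, hF⟩ := exists_path_set G hreach
    set T' := (T.erase u).erase v with hT'
    have hT'card : T'.card = n - 2 := by
      rw [hT', Finset.card_erase_of_mem (Finset.mem_erase.mpr ⟨hvne, hvT⟩),
        Finset.card_erase_of_mem hu, hcard]
      omega
    have hn2 : n - 2 < n := by
      have : 0 < n := hcard ▸ Finset.card_pos.mpr ⟨u, hu⟩
      omega
    have hT'even : ∀ c' : G.simple.ConnectedComponent,
        Even ((Finset.univ.filter
          (fun w => w ∈ T' ∧ G.simple.connectedComponentMk w = c')).card) := by
      intro c'
      have hset : Finset.univ.filter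
            (fun w => w ∈ T' ∧ G.simple.connectedComponentMk w = c')
          = ((Finset.univ.filter
              (fun w => w ∈ T ∧ G.simple.connectedComponentMk w = c')).erase u).erase v := by
        ext w
        simp only [hT', Finset.mem_filter, Finset.mem_univ, true_and, Finset.mem_erase]
        tauto
      by_cases hcc : c' = c
      · subst hcc
        rw [← hs] at hset
        have hv' : v ∈ s.erase u := by
          rw [hs]; simp [Finset.mem_erase, hvne, hvT, hvc]
        rw [hset, Finset.card_erase_of_mem hv', Finset.card_erase_of_mem hmem]
        rcases hT c with ⟨k, hk⟩
        rw [← hs] at hk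
        rw [hk]
        have hk2 : 2 ≤ k + k := by
          have := Finset.card_pos.mpr ⟨u, hmem⟩
          omega
        exact ⟨k - 1, by omega⟩
      · have hu' : u ∉ Finset.univ.filter
            (fun w => w ∈ T ∧ G.simple.connectedComponentMk w = c') := by
          simp only [Finset.mem_filter, Finset.mem_univ, true_and, not_and]
          intro _
          rw [← hc]; exact Ne.symm hcc
        have hv'' : v ∉ (Finset.univ.filter
            (fun w => w ∈ T ∧ G.simple.connectedComponentMk w = c')).erase u := by
          simp only [Finset.mem_erase, Finset.mem_filter, Finset.mem_univ, true_and, not_and]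
          intro _ _
          rw [hvc]; exact Ne.symm hcc
        rw [hset, Finset.erase_eq_of_notMem hv'', Finset.erase_eq_of_notMem hu']
        exact hT c'
    obtain ⟨J', hJ'⟩ := ih (n - 2) hn2 T' hT'card hT'even
    refine ⟨symmDiff J' F, fun x => ?_⟩
    rw [degIn_symmDiff_parity, hJ', hF]
    simp only [hT', Finset.mem_erase]
    unfold Xor' Xor
    by_cases h1 : x = u <;> by_cases h2 : x = v <;> simp_all

end Aux


theorem stmt3 {V E : Type} [Fintype V] [Fintype E] (G : Multigraph V E) (T : Finset V) :
    (∃ J : Finset E, ∀ v : V, (Odd (G.degIn J v) ↔ v ∈ T)) ↔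
    ∀ c : G.simple.ConnectedComponent,
      Even (Nat.card {v : V // v ∈ T ∧ G.simple.connectedComponentMk v = c}) := by
  have hcardeq : ∀ (c : G.simple.ConnectedComponent),
      Nat.card {v : V // v ∈ T ∧ G.simple.connectedComponentMk v = c}
        = (Finset.univ.filter
            (fun v => v ∈ T ∧ G.simple.connectedComponentMk v = c)).card := by
    intro c
    rw [Nat.card_eq_fintype_card]
    simp [Fintype.card_subtype]
  constructor
  · rintro ⟨J, hJ⟩ c
    rw [hcardeq]
    exact forward_lemma G T J hJ c
  · intro h
    exact build_lemma G T.card T rfl (fun c => by rw [← hcardeq]; exact h c)
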